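/- Let k be a field of characteristic 2, G a finite group, and ε : G → ℤ/2ℤ a nontrivial essential character. Set G_c = {g ∈ G : ε(g) = 1} and let S ⊆ G_c satisfy S ∩ S⁻¹ = ∅ and S ∪ S⁻¹ = G_c. For a hermitian element h of k[G] set h_ε = Σ_{s∈S} δ_s(h). Then for every a ∈ k[G]: (a·h·a*)_ε = t(a)²·h_ε + t(h)·t₊(a)·t₋(a), where t₊(a) = Σ_{g : ε(g)=0} δ_g(a) and t₋(a) = Σ_{g : ε(g)=1} δ_g(a). -/

import Mathlib

set_option linter.unusedSectionVars false


/-- The canonical involution `x ↦ x*` of the group algebra `k[G]`, determined by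
`g* = g⁻¹` for `g ∈ G`. -/
noncomputable def gStar {k G : Type*} [Semiring k] [Group G] (x : MonoidAlgebra k G) :
    MonoidAlgebra k G := MonoidAlgebra.ofCoeff (Finsupp.equivMapDomain (Equiv.inv G) x.coeff)

instance instCoeFunMonoidAlgebraPort {k G : Type*} [Semiring k] : CoeFun (MonoidAlgebra k G) (fun _ => G → k) :=
  ⟨fun x => ⇑x.coeff⟩


section Aux

variable {k G : Type*} [Field k] [CharP k 2] [Group G] [Fintype G] [DecidableEq G]

lemma gStar_apply' (a : MonoidAlgebra k G) (z : G) : gStar a z = a z⁻¹ := rfl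

lemma mul_apply'' (f g : MonoidAlgebra k G) (w : G) :
    (f * g) w = ∑ x : G, f x * g (x⁻¹ * w) := by
  rw [MonoidAlgebra.mul_apply, Finsupp.sum_fintype _ _ (fun _ => by simp [Finsupp.sum])]
  refine Finset.sum_congr rfl fun x _ => ?_
  rw [Finsupp.sum_fintype _ _ (fun _ => by simp)]
  rw [Finset.sum_eq_single (x⁻¹ * w)]
  · simp
  · intro b _ hb
    rw [if_neg]
    intro hxb
    exact hb (by rw [← hxb]; group)
  · intro habs; exact absurd (Finset.mem_univ _) habs

-- per-s triple expansion
lemma triple_expand (a h : MonoidAlgebra k G) (s : G) :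
    (a * h * gStar a) s =
      ∑ x : G, ∑ y : G, ∑ z : G, if x * y * z⁻¹ = s then a x * h y * a z else 0 := by
  calc (a * h * gStar a) s = ∑ u : G, (a * h) u * a (s⁻¹ * u) := by
        rw [mul_apply'']
        refine Finset.sum_congr rfl fun u _ => ?_
        rw [gStar_apply']
        congr 2
        group
    _ = ∑ u : G, ∑ x : G, a x * h (x⁻¹ * u) * a (s⁻¹ * u) := by
        refine Finset.sum_congr rfl fun u _ => ?_
        rw [mul_apply'', Finset.sum_mul]
    _ = ∑ x : G, ∑ u : G, a x * h (x⁻¹ * u) * a (s⁻¹ * u) := Finset.sum_comm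
    _ = ∑ x : G, ∑ y : G, a x * h y * a (s⁻¹ * (x * y)) := by
        refine Finset.sum_congr rfl fun x _ => ?_
        refine (Fintype.sum_equiv (Equiv.mulLeft x)
          (fun y => a x * h y * a (s⁻¹ * (x * y)))
          (fun u => a x * h (x⁻¹ * u) * a (s⁻¹ * u)) fun y => ?_).symm
        simp [Equiv.mulLeft]
    _ = ∑ x : G, ∑ y : G, ∑ z : G, if x * y * z⁻¹ = s then a x * h y * a z else 0 := by
        refine Finset.sum_congr rfl fun x _ => Finset.sum_congr rfl fun y _ => ?_
        rw [Finset.sum_eq_single (s⁻¹ * (x * y))]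
        · rw [if_pos (by group)]
        · intro b _ hb
          rw [if_neg]
          intro hxb
          exact hb (by rw [← hxb]; group)
        · intro habs; exact absurd (Finset.mem_univ _) habs

end Aux

section Aux2
variable {k G : Type*} [Field k] [CharP k 2] [Group G] [Fintype G] [DecidableEq G]

lemma factor (a : MonoidAlgebra k G) (P Q : G → Prop) [DecidablePred P] [DecidablePred Q] :
    (∑ x : G, ∑ z : G, if P x ∧ Q z then a x * a z else 0) =
      (∑ x ∈ Finset.univ.filter P, a x) * (∑ z ∈ Finset.univ.filter Q, a z) := by
  symm
  rw [Finset.sum_mul_sum, Finset.sum_filter]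
  refine Finset.sum_congr rfl fun x _ => ?_
  by_cases hP : P x
  · rw [if_pos hP, Finset.sum_filter]
    exact Finset.sum_congr rfl fun z _ => by by_cases hQ : Q z <;> simp [hP, hQ]
  · rw [if_neg hP]
    exact (Finset.sum_eq_zero fun z _ => by simp [hP]).symm

end Aux2

/-- Serre's proposition 7.8.6: let `k` be a field of characteristic 2, `G` a finite
group, `ε : G → ℤ/2ℤ` a nontrivial essential character, `G_c = {g | ε g = 1}`, and
`S ⊆ G_c` with `S ∩ S⁻¹ = ∅` and `S ∪ S⁻¹ = G_c`. For a hermitian `h ∈ k[G]` set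
`h_ε = Σ_{s∈S} δ_s(h)`. Then for all `a ∈ k[G]`:
`(a·h·a*)_ε = t(a)²·h_ε + t(h)·t₊(a)·t₋(a)`, where `t₊(a) = Σ_{ε(g)=0} a_g` and
`t₋(a) = Σ_{ε(g)=1} a_g`. -/
theorem stmt_18 (k G : Type*) [Field k] [CharP k 2] [Group G] [Fintype G]
    (ε : G → ZMod 2) (hhom : ∀ a b : G, ε (a * b) = ε a + ε b)
    (hess : ∀ g : G, g ^ 2 = 1 → ε g = 0) (hnt : ∃ g : G, ε g ≠ 0)
    (S : Finset G) (hS1 : ∀ s ∈ S, ε s = 1) (hS2 : ∀ s ∈ S, s⁻¹ ∉ S)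
    (hS3 : ∀ g : G, ε g = 1 → g ∈ S ∨ g⁻¹ ∈ S)
    (h : MonoidAlgebra k G) (hherm : gStar h = h) (a : MonoidAlgebra k G) :
    ∑ s ∈ S, (a * h * gStar a).coeff s =
      (∑ g : G, a.coeff g) ^ 2 * (∑ s ∈ S, h.coeff s) +
        (∑ g : G, h.coeff g) * (∑ g ∈ Finset.univ.filter fun g => ε g = 0, a.coeff g) *
          (∑ g ∈ Finset.univ.filter fun g => ε g = 1, a.coeff g) := by
  classical
  have z01 : ∀ u : ZMod 2, u = 0 ∨ u = 1 := by decide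
  have zadd : ∀ u v : ZMod 2, u + v = 0 → v = u := by decide
  have addself : ∀ x : k, x + x = 0 := fun x => CharTwo.add_self_eq_zero x
  have sq_add : ∀ x y : k, (x + y) ^ 2 = x ^ 2 + y ^ 2 := fun x y => add_pow_char x y 2
  have hone : ε 1 = 0 := by
    have h1 := hhom 1 1
    rw [one_mul] at h1
    exact left_eq_add.mp h1
  have hinv : ∀ g : G, ε g⁻¹ = ε g := by
    intro g
    have h1 := hhom g g⁻¹
    rw [mul_inv_cancel, hone] at h1
    exact zadd _ _ h1.symm
  have εprod : ∀ x y z : G, ε (x * y * z⁻¹) = ε x + ε y + ε z := by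
    intro x y z; rw [hhom, hhom, hinv]
  have hherm' : ∀ y : G, h y⁻¹ = h y := by
    intro y
    conv_lhs => rw [← gStar_apply' h y, hherm]
  set tp := ∑ g ∈ Finset.univ.filter fun g => ε g = 0, a g with htp
  set tm := ∑ g ∈ Finset.univ.filter fun g => ε g = 1, a g with htm
  set ta := ∑ g : G, a g with hta
  set c : G → k := fun y => ∑ x : G, ∑ z : G, if x * y * z⁻¹ ∈ S then a x * a z else 0
    with hcdef
  set r : G → k := fun y => (if y ∈ S then ta ^ 2 else 0) + tp * tm with hrdef
  have hta_split : ta = tp + tm := by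
    rw [hta, htp, htm,
      ← Finset.sum_filter_add_sum_filter_not Finset.univ (fun g => ε g = 0) a]
    congr 1
    apply Finset.sum_congr _ fun _ _ => rfl
    ext g
    simp only [Finset.mem_filter, Finset.mem_univ, true_and]
    constructor
    · intro hg; rcases z01 (ε g) with h'|h'
      · exact absurd h' hg
      · exact h'
    · intro hg h0; rw [hg] at h0; exact absurd h0 (by decide)
  -- Step 1
  have step1 : ∑ s ∈ S, (a * h * gStar a) s = ∑ y : G, h y * c y := by
    calc ∑ s ∈ S, (a * h * gStar a) s
        = ∑ s ∈ S, ∑ x : G, ∑ y : G, ∑ z : G,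
            if x * y * z⁻¹ = s then a x * h y * a z else 0 :=
          Finset.sum_congr rfl fun s _ => triple_expand a h s
      _ = ∑ x : G, ∑ s ∈ S, ∑ y : G, ∑ z : G,
            if x * y * z⁻¹ = s then a x * h y * a z else 0 := Finset.sum_comm
      _ = ∑ x : G, ∑ y : G, ∑ z : G,
            if x * y * z⁻¹ ∈ S then a x * h y * a z else 0 := by
          refine Finset.sum_congr rfl fun x _ => ?_
          rw [Finset.sum_comm]
          refine Finset.sum_congr rfl fun y _ => ?_
          rw [Finset.sum_comm]
          refine Finset.sum_congr rfl fun z _ => ?_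
          exact Finset.sum_ite_eq S (x * y * z⁻¹) fun _ => a x * h y * a z
      _ = ∑ y : G, ∑ x : G, ∑ z : G,
            if x * y * z⁻¹ ∈ S then a x * h y * a z else 0 := Finset.sum_comm
      _ = ∑ y : G, h y * c y := by
          refine Finset.sum_congr rfl fun y _ => ?_
          simp only [hcdef, Finset.mul_sum, mul_ite, mul_zero]
          refine Finset.sum_congr rfl fun x _ => Finset.sum_congr rfl fun z _ => ?_
          by_cases hm : x * y * z⁻¹ ∈ S <;> simp [hm] <;> ring
  -- swap formula for c y⁻¹
  have hswap : ∀ y : G, c y⁻¹ =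
      ∑ x : G, ∑ z : G, if (x * y * z⁻¹)⁻¹ ∈ S then a x * a z else 0 := by
    intro y
    simp only [hcdef]
    rw [Finset.sum_comm]
    refine Finset.sum_congr rfl fun x _ => Finset.sum_congr rfl fun z _ => ?_
    have e : z * y⁻¹ * x⁻¹ = (x * y * z⁻¹)⁻¹ := by group
    rw [e, mul_comm (a z) (a x)]
  have claimBc : ∀ y : G, c y + c y⁻¹ = if ε y = 1 then ta ^ 2 else 0 := by
    intro y
    rw [hswap y]
    simp only [hcdef]
    rw [← Finset.sum_add_distrib]
    have point : ∀ x z : G,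
        ((if x * y * z⁻¹ ∈ S then a x * a z else 0)
          + (if (x * y * z⁻¹)⁻¹ ∈ S then a x * a z else 0))
        = if ε x + ε y + ε z = 1 then a x * a z else 0 := by
      intro x z
      by_cases h1 : x * y * z⁻¹ ∈ S
      · have h2 : (x * y * z⁻¹)⁻¹ ∉ S := hS2 _ h1
        rw [if_pos h1, if_neg h2, add_zero, if_pos (by rw [← εprod]; exact hS1 _ h1)]
      · by_cases h2 : (x * y * z⁻¹)⁻¹ ∈ S
        · rw [if_neg h1, if_pos h2, zero_add,
            if_pos (by rw [← εprod, ← hinv (x * y * z⁻¹)]; exact hS1 _ h2)]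
        · rw [if_neg h1, if_neg h2, add_zero, if_neg]
          intro hcon
          rw [← εprod] at hcon
          rcases hS3 _ hcon with hm|hm
          exacts [h1 hm, h2 hm]
    have e0 : (∑ x : G, ((∑ z : G, if x * y * z⁻¹ ∈ S then a x * a z else 0)
          + ∑ z : G, if (x * y * z⁻¹)⁻¹ ∈ S then a x * a z else 0))
        = ∑ x : G, ∑ z : G, (if ε x + ε y + ε z = 1 then a x * a z else 0) := by
      refine Finset.sum_congr rfl fun x _ => ?_
      rw [← Finset.sum_add_distrib]
      exact Finset.sum_congr rfl fun z _ => point x z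
    rw [e0]
    rcases z01 (ε y) with hy|hy
    · rw [if_neg (show ¬ (ε y = 1) from by rw [hy]; decide)]
      have cond : ∀ u v : ZMod 2, (u + 0 + v = 1) ↔ ((u = 0 ∧ v = 1) ∨ (u = 1 ∧ v = 0)) := by
        decide
      have splitp : ∀ x z : G, (if ε x + ε y + ε z = 1 then a x * a z else 0)
          = (if ε x = 0 ∧ ε z = 1 then a x * a z else 0)
            + (if ε x = 1 ∧ ε z = 0 then a x * a z else 0) := by
        intro x z
        rw [hy]
        by_cases hA : ε x = 0 ∧ ε z = 1
        · rw [if_pos ((cond _ _).mpr (Or.inl hA)), if_pos hA, if_neg, add_zero]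
          rintro ⟨h1', h2'⟩; rw [hA.1] at h1'; exact absurd h1' (by decide)
        · by_cases hB : ε x = 1 ∧ ε z = 0
          · rw [if_pos ((cond _ _).mpr (Or.inr hB)), if_neg hA, if_pos hB, zero_add]
          · rw [if_neg, if_neg hA, if_neg hB, add_zero]
            intro hcon; rcases (cond _ _).mp hcon with h'|h'
            exacts [hA h', hB h']
      have e1 : (∑ x : G, ∑ z : G, (if ε x + ε y + ε z = 1 then a x * a z else 0))
          = (∑ x : G, ∑ z : G, (if ε x = 0 ∧ ε z = 1 then a x * a z else 0))
            + (∑ x : G, ∑ z : G, (if ε x = 1 ∧ ε z = 0 then a x * a z else 0)) := by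
        rw [← Finset.sum_add_distrib]
        refine Finset.sum_congr rfl fun x _ => ?_
        rw [← Finset.sum_add_distrib]
        exact Finset.sum_congr rfl fun z _ => splitp x z
      rw [e1, factor a (fun g => ε g = 0) (fun g => ε g = 1),
        factor a (fun g => ε g = 1) (fun g => ε g = 0), ← htp, ← htm,
        mul_comm tm tp]
      exact addself _
    · rw [if_pos hy]
      have cond : ∀ u v : ZMod 2, (u + 1 + v = 1) ↔ ((u = 0 ∧ v = 0) ∨ (u = 1 ∧ v = 1)) := by
        decide
      have splitp : ∀ x z : G, (if ε x + ε y + ε z = 1 then a x * a z else 0)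
          = (if ε x = 0 ∧ ε z = 0 then a x * a z else 0)
            + (if ε x = 1 ∧ ε z = 1 then a x * a z else 0) := by
        intro x z
        rw [hy]
        by_cases hA : ε x = 0 ∧ ε z = 0
        · rw [if_pos ((cond _ _).mpr (Or.inl hA)), if_pos hA, if_neg, add_zero]
          rintro ⟨h1', h2'⟩; rw [hA.1] at h1'; exact absurd h1' (by decide)
        · by_cases hB : ε x = 1 ∧ ε z = 1
          · rw [if_pos ((cond _ _).mpr (Or.inr hB)), if_neg hA, if_pos hB, zero_add]
          · rw [if_neg, if_neg hA, if_neg hB, add_zero]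
            intro hcon; rcases (cond _ _).mp hcon with h'|h'
            exacts [hA h', hB h']
      have e1 : (∑ x : G, ∑ z : G, (if ε x + ε y + ε z = 1 then a x * a z else 0))
          = (∑ x : G, ∑ z : G, (if ε x = 0 ∧ ε z = 0 then a x * a z else 0))
            + (∑ x : G, ∑ z : G, (if ε x = 1 ∧ ε z = 1 then a x * a z else 0)) := by
        rw [← Finset.sum_add_distrib]
        refine Finset.sum_congr rfl fun x _ => ?_
        rw [← Finset.sum_add_distrib]
        exact Finset.sum_congr rfl fun z _ => splitp x z
      rw [e1, factor a (fun g => ε g = 0) (fun g => ε g = 0),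
        factor a (fun g => ε g = 1) (fun g => ε g = 1), ← htp, ← htm,
        hta_split, sq_add, pow_two, pow_two]
  have claimA : ∀ y : G, y * y = 1 → c y = tp * tm := by
    intro y hy2
    have hyinv : y⁻¹ = y := inv_eq_of_mul_eq_one_right hy2
    have hεy : ε y = 0 := hess y (by rw [pow_two]; exact hy2)
    have einv : ∀ p : G × G, (p.1 * y * p.2⁻¹)⁻¹ = p.2 * y * p.1⁻¹ := by
      intro p
      rw [show (p.1 * y * p.2⁻¹)⁻¹ = p.2 * y⁻¹ * p.1⁻¹ from by group, hyinv]
    have lhs_eq : c y =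
        ∑ p ∈ Finset.univ.filter (fun p : G × G => p.1 * y * p.2⁻¹ ∈ S), a p.1 * a p.2 := by
      simp only [hcdef]
      rw [Finset.sum_filter, Fintype.sum_prod_type]
    have rhs_eq : tp * tm =
        ∑ p ∈ Finset.univ.filter (fun p : G × G => ε p.1 = 0 ∧ ε p.2 = 1), a p.1 * a p.2 := by
      rw [htp, htm, ← factor a (fun g => ε g = 0) (fun g => ε g = 1),
        Finset.sum_filter, Fintype.sum_prod_type]
    rw [lhs_eq, rhs_eq]
    have hT_eps : ∀ p : G × G, p.1 * y * p.2⁻¹ ∈ S → ε p.1 + ε p.2 = 1 := by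
      intro p hp
      have h1 := hS1 _ hp
      rw [εprod, hεy, add_zero] at h1
      exact h1
    refine Finset.sum_nbij' (fun p => if ε p.1 = 0 then p else p.swap)
      (fun q => if q.1 * y * q.2⁻¹ ∈ S then q else q.swap) ?_ ?_ ?_ ?_ ?_
    · intro p hp
      simp only [Finset.mem_filter, Finset.mem_univ, true_and] at hp ⊢
      have e1 := hT_eps p hp
      by_cases h0 : ε p.1 = 0
      · rw [if_pos h0]
        have hd : ∀ u v : ZMod 2, u + v = 1 → u = 0 → v = 1 := by decide
        exact ⟨h0, hd _ _ e1 h0⟩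
      · rw [if_neg h0]
        have hd : ∀ u v : ZMod 2, u + v = 1 → ¬(u = 0) → (v = 0 ∧ u = 1) := by decide
        simp only [Prod.fst_swap, Prod.snd_swap]
        exact hd _ _ e1 h0
    · intro q hq
      simp only [Finset.mem_filter, Finset.mem_univ, true_and] at hq ⊢
      by_cases hm : q.1 * y * q.2⁻¹ ∈ S
      · rw [if_pos hm]; exact hm
      · rw [if_neg hm]
        simp only [Prod.fst_swap, Prod.snd_swap]
        have hε1 : ε (q.1 * y * q.2⁻¹) = 1 := by
          rw [εprod, hεy, hq.1, hq.2]; decide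
        rcases hS3 _ hε1 with hm'|hm'
        · exact absurd hm' hm
        · rwa [einv q] at hm'
    · intro p hp
      simp only [Finset.mem_filter, Finset.mem_univ, true_and] at hp
      by_cases h0 : ε p.1 = 0
      · rw [if_pos h0, if_pos hp]
      · rw [if_neg h0]
        have hns : ¬ (p.swap.1 * y * p.swap.2⁻¹ ∈ S) := by
          simp only [Prod.fst_swap, Prod.snd_swap]
          intro hmem
          rw [← einv p] at hmem
          exact hS2 _ hp hmem
        rw [if_neg hns, Prod.swap_swap]
    · intro q hq
      simp only [Finset.mem_filter, Finset.mem_univ, true_and] at hq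
      by_cases hm : q.1 * y * q.2⁻¹ ∈ S
      · rw [if_pos hm, if_pos hq.1]
      · rw [if_neg hm]
        have hns : ¬ (ε q.swap.1 = 0) := by
          simp only [Prod.fst_swap]
          rw [hq.2]
          decide
        rw [if_neg hns, Prod.swap_swap]
    · intro p _
      by_cases h0 : ε p.1 = 0
      · rw [if_pos h0]
      · rw [if_neg h0]
        simp only [Prod.fst_swap, Prod.snd_swap]
        ring
  have claimBr : ∀ y : G, r y + r y⁻¹ = if ε y = 1 then ta ^ 2 else 0 := by
    intro y
    simp only [hrdef]
    rw [show ∀ A B C : k, (A + C) + (B + C) = (A + B) + (C + C) from fun A B C => by ring,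
      addself, add_zero]
    by_cases hm : y ∈ S
    · rw [if_pos hm, if_neg (hS2 _ hm), add_zero, if_pos (hS1 _ hm)]
    · by_cases hm' : y⁻¹ ∈ S
      · rw [if_neg hm, if_pos hm', zero_add, if_pos (by rw [← hinv]; exact hS1 _ hm')]
      · rw [if_neg hm, if_neg hm', add_zero, if_neg]
        intro h1
        rcases hS3 _ h1 with h'|h'
        exacts [hm h', hm' h']
  have key : ∑ y : G, h y * c y = ∑ y : G, h y * r y := by
    have hzero : ∑ y : G, (h y * c y + h y * r y) = 0 := by
      apply Finset.sum_involution (fun y _ => y⁻¹)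
      · intro y _
        rw [hherm' y]
        rw [show h y * c y + h y * r y + (h y * c y⁻¹ + h y * r y⁻¹)
            = h y * ((c y + c y⁻¹) + (r y + r y⁻¹)) from by ring,
          claimBc, claimBr, addself, mul_zero]
      · intro y _ hfy
        intro hyy
        apply hfy
        have hy2 : y * y = 1 := by nth_rewrite 2 [← hyy]; exact mul_inv_cancel y
        have hyS : y ∉ S := by
          intro hm
          have h1 := hS1 _ hm
          rw [hess y (by rw [pow_two]; exact hy2)] at h1
          exact absurd h1 (by decide)
        rw [claimA y hy2]
        simp only [hrdef]
        rw [if_neg hyS, zero_add]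
        exact addself _
      · intro y _; exact inv_inv y
      · intro y _; exact Finset.mem_univ _
    rw [Finset.sum_add_distrib] at hzero
    have e := addself (∑ y : G, h y * r y)
    calc ∑ y : G, h y * c y
        = (∑ y : G, h y * c y + ∑ y : G, h y * r y) + ∑ y : G, h y * r y := by
          rw [add_assoc, e, add_zero]
      _ = ∑ y : G, h y * r y := by rw [hzero, zero_add]
  rw [step1, key]
  simp only [hrdef]
  calc ∑ y : G, h y * ((if y ∈ S then ta ^ 2 else 0) + tp * tm)
      = ∑ y : G, ((if y ∈ S then h y * ta ^ 2 else 0) + h y * (tp * tm)) := by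
        refine Finset.sum_congr rfl fun y _ => ?_
        by_cases hm : y ∈ S <;> simp [hm, mul_add]
    _ = (∑ y : G, if y ∈ S then h y * ta ^ 2 else 0) + (∑ y : G, h y) * (tp * tm) := by
        rw [Finset.sum_add_distrib, ← Finset.sum_mul]
    _ = (∑ y ∈ S, h y * ta ^ 2) + (∑ y : G, h y) * (tp * tm) := by
        rw [Finset.sum_ite_mem, Finset.univ_inter]
    _ = ta ^ 2 * (∑ s ∈ S, h s) + (∑ g : G, h g) * tp * tm := by
        rw [← Finset.sum_mul]; ring
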